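/- arXiv:1804.00916 — 2 statements merged into one kernel-verified Lean document; each statement's English description precedes it below -/
import Mathlib

section
/- Let k be a nontrivial commutative ring, let V = k^n be the free k-module with basis v_1, ..., v_n, and let W_{n-1} = {w ∈ W_n : w(n) = n} act on V^{⊗r} by restriction of the diagonal basis-permuting action of W_n. If r + 1 ≥ n, then the induced algebra homomorphism Φ_{n,r+1/2} from the group algebra k[W_{n-1}] to End_k(V^{⊗r}) is injective (the representation is faithful). -/
noncomputable section

open Equiv

/-- The linear action of a group `G` on the free `k`-module `X → k` of functions,
induced from a `G`-action on `X` by `(g • f) x = f (g⁻¹ • x)`. -/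
def actEnd (k : Type) [CommRing k] (G : Type) [Group G] (X : Type) [MulAction G X] :
    G →* Module.End k (X → k) where
  toFun g := LinearMap.funLeft k k fun x => g⁻¹ • x
  map_one' := by
    ext f x
    simp
  map_mul' g₁ g₂ := by
    ext f x
    simp [mul_smul]

/-- The diagonal (value-permutation) action of the symmetric group `W_n` on
`V^{⊗r}` (`V = k^n`), modelled as the free `k`-module on multi-indices `Fin r → Fin n`;
on basis vectors, `w ⬝ (v_{i_1} ⊗ ⋯ ⊗ v_{i_r}) = v_{w i_1} ⊗ ⋯ ⊗ v_{w i_r}`. -/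
def permEnd (k : Type) [CommRing k] (n r : ℕ) :
    Equiv.Perm (Fin n) →* Module.End k ((Fin r → Fin n) → k) :=
  actEnd k (Equiv.Perm (Fin n)) (Fin r → Fin n)

/-- `Φ_{n,r} : k[W_n] → End_k(V^{⊗r})`. -/
def PhiAlg (k : Type) [CommRing k] (n r : ℕ) :
    MonoidAlgebra k (Equiv.Perm (Fin n)) →ₐ[k] Module.End k ((Fin r → Fin n) → k) :=
  MonoidAlgebra.lift k (Module.End k ((Fin r → Fin n) → k)) (Equiv.Perm (Fin n)) (permEnd k n r)

/-- The restriction of `Φ_{n,r}` to the group algebra of a subgroup `G ≤ W_n`. -/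
def PhiSub (k : Type) [CommRing k] (n r : ℕ) (G : Subgroup (Equiv.Perm (Fin n))) :
    MonoidAlgebra k ↥G →ₐ[k] Module.End k ((Fin r → Fin n) → k) :=
  MonoidAlgebra.lift k (Module.End k ((Fin r → Fin n) → k)) ↥G ((permEnd k n r).comp G.subtype)

/-- `W_{n-1} = {w ∈ W_n : w(n) = n}`, the stabilizer of the last basis vector. -/
def stabLast (n : ℕ) (hn : 0 < n) : Subgroup (Equiv.Perm (Fin n)) :=
  MulAction.stabilizer (Equiv.Perm (Fin n)) (⟨n - 1, Nat.sub_lt hn Nat.one_pos⟩ : Fin n)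

/-- `V(Λ)`: the span of the basis tensors whose multi-index has value-type `Λ`
(the value-type of a multi-index `i` is the set-partition `Setoid.ker i` by fibers). -/
def Vpart (k : Type) [CommRing k] (n r : ℕ) (Λ : Setoid (Fin r)) :
    Submodule k ((Fin r → Fin n) → k) :=
  Submodule.span k {f | ∃ i : Fin r → Fin n, Setoid.ker i = Λ ∧ f = Pi.single i 1}

/-- `V'(Λ')`: the span of the basis tensors `v_{i_1} ⊗ ⋯ ⊗ v_{i_r} ⊗ v_n`
whose multi-index `(i_1, …, i_r, n)` has value-type `Λ'`. -/
def Vpart' (k : Type) [CommRing k] (n r : ℕ) (hn : 0 < n) (Λ' : Setoid (Fin (r + 1))) :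
    Submodule k ((Fin (r + 1) → Fin n) → k) :=
  Submodule.span k {f | ∃ i : Fin (r + 1) → Fin n, Setoid.ker i = Λ' ∧
    i (Fin.last r) = (⟨n - 1, Nat.sub_lt hn Nat.one_pos⟩ : Fin n) ∧ f = Pi.single i 1}

/-- The submodule `V^{⊗r} ⊗ v_n ⊆ V^{⊗(r+1)}`. -/
def lastSub (k : Type) [CommRing k] (n r : ℕ) (hn : 0 < n) :
    Submodule k ((Fin (r + 1) → Fin n) → k) :=
  Submodule.span k {f | ∃ i : Fin (r + 1) → Fin n,
    i (Fin.last r) = (⟨n - 1, Nat.sub_lt hn Nat.one_pos⟩ : Fin n) ∧ f = Pi.single i 1}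

/-- The multi-index of the tensor `v_{n-l+1} ⊗ ⋯ ⊗ v_n`. -/
def baseIdx (n l : ℕ) (h : l ≤ n) : Fin l → Fin n :=
  fun α => ⟨n - l + α.1, by have := α.isLt; omega⟩

/-- `H_n(l)`: the `k[W_n]`-submodule of `V^{⊗l}` generated by `v_{n-l+1} ⊗ ⋯ ⊗ v_n`. -/
def Hmod (k : Type) [CommRing k] (n l : ℕ) (h : l ≤ n) :
    Submodule k ((Fin l → Fin n) → k) :=
  Submodule.span k
    (Set.range fun w : Equiv.Perm (Fin n) => permEnd k n l w (Pi.single (baseIdx n l h) 1))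

/-- The multi-index of the tensor `v_{n-m} ⊗ ⋯ ⊗ v_{n-1}` (inside `U = ⟨v_1, …, v_{n-1}⟩`). -/
def baseIdx' (n m : ℕ) (h : m < n) : Fin m → Fin n :=
  fun α => ⟨n - 1 - m + α.1, by have := α.isLt; omega⟩

/-- `H_{n-1}(m)`: the `k[W_{n-1}]`-submodule of `U^{⊗m}` generated by
`v_{n-m} ⊗ ⋯ ⊗ v_{n-1}`, where `U = ⟨v_1, …, v_{n-1}⟩`. -/
def Hprime (k : Type) [CommRing k] (n m : ℕ) (h : m < n) :
    Submodule k ((Fin m → Fin n) → k) :=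
  Submodule.span k
    (Set.range fun w : ↥(stabLast n (by omega)) =>
      permEnd k n m ↑w (Pi.single (baseIdx' n m h) 1))

/-- The Young subgroup `W_{(n-l,1^l)}` of permutations fixing each of the last `l` points. -/
def fixTop (n l : ℕ) : Subgroup (Equiv.Perm (Fin n)) where
  carrier := {w | ∀ j : Fin n, n - l ≤ (j : ℕ) → w j = j}
  one_mem' := by intro j _; rfl
  mul_mem' := by
    intro a b ha hb j hj
    simp only [Set.mem_setOf_eq] at ha hb
    rw [Equiv.Perm.mul_apply, hb j hj, ha j hj]
  inv_mem' := by
    intro a ha j hj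
    simp only [Set.mem_setOf_eq] at ha
    conv_lhs => rw [← ha j hj]
    exact (show a⁻¹ (a j) = j from a.symm_apply_apply j)

/-- The index of the consecutive block (with block sizes `lam`) containing position `x`. -/
def blockIdx (lam : List ℕ) (x : ℕ) : ℕ :=
  ((List.range lam.length).filter fun t => (lam.take (t + 1)).sum ≤ x).length

/-- The Young subgroup `W_λ ≤ W_d`: permutations preserving each consecutive block
of sizes `λ_1, λ_2, …`. -/
def youngSubgroup (d : ℕ) (lam : List ℕ) : Subgroup (Equiv.Perm (Fin d)) where
  carrier := {w | ∀ j : Fin d, blockIdx lam ((w j : Fin d) : ℕ) = blockIdx lam (j : ℕ)}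
  one_mem' := by intro j; rfl
  mul_mem' := by
    intro a b ha hb j
    simp only [Set.mem_setOf_eq] at ha hb
    rw [Equiv.Perm.mul_apply, ha (b j), hb j]
  inv_mem' := by
    intro a ha j
    simp only [Set.mem_setOf_eq] at ha
    conv_rhs => rw [← (show a (a⁻¹ j) = j from a.apply_symm_apply j)]
    rw [ha (a⁻¹ j)]

/-- `x_λ = Σ_{w ∈ W_λ} w ∈ k[W_d]`. -/
def xElt (k : Type) [CommRing k] (d : ℕ) (lam : List ℕ) :
    MonoidAlgebra k (Equiv.Perm (Fin d)) :=
  letI := Classical.decPred (· ∈ youngSubgroup d lam)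
  ∑ w ∈ Finset.univ.filter (· ∈ youngSubgroup d lam), MonoidAlgebra.single w (1 : k)

/-- `y_λ = Σ_{w ∈ W_λ} sgn(w) w ∈ k[W_d]`. -/
def yElt (k : Type) [CommRing k] (d : ℕ) (lam : List ℕ) :
    MonoidAlgebra k (Equiv.Perm (Fin d)) :=
  letI := Classical.decPred (· ∈ youngSubgroup d lam)
  ∑ w ∈ Finset.univ.filter (· ∈ youngSubgroup d lam),
    MonoidAlgebra.single w ((Equiv.Perm.sign w : ℤ) : k)

/-- `y_λ = Σ_{w ∈ W_λ ∩ G} sgn(w) w`, as an element of the group algebra of a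
subgroup `G ≤ W_d` (for `G = W_{n-1}` and `λ ⊢ n-1` this is the usual `y_λ ∈ k[W_{n-1}]`). -/
def yEltSub (k : Type) [CommRing k] {d : ℕ} (G : Subgroup (Equiv.Perm (Fin d)))
    (lam : List ℕ) : MonoidAlgebra k ↥G :=
  letI : Fintype ↥G := Fintype.ofFinite ↥G
  letI := Classical.decPred fun w : ↥G => (w : Equiv.Perm (Fin d)) ∈ youngSubgroup d lam
  ∑ w ∈ Finset.univ.filter (fun w : ↥G => (w : Equiv.Perm (Fin d)) ∈ youngSubgroup d lam),
    MonoidAlgebra.single w ((Equiv.Perm.sign (w : Equiv.Perm (Fin d)) : ℤ) : k)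

/-- The dominance order on partitions (as lists of parts): `lam ⊵ mu`. -/
def Dominates (lam mu : List ℕ) : Prop :=
  ∀ t : ℕ, (mu.take t).sum ≤ (lam.take t).sum

/-- The conjugate (transpose) partition: `μᵀ_i = #{j : μ_j ≥ i}`. -/
def conjList (mu : List ℕ) : List ℕ :=
  (List.range mu.headI).map fun i => (mu.filter fun p => i < p).length

/-- `lam` is a partition of `d`: positive parts, in weakly decreasing order, summing to `d`. -/
def IsPartitionList (d : ℕ) (lam : List ℕ) : Prop :=
  (∀ p ∈ lam, 0 < p) ∧ lam.sum = d ∧ lam.Pairwise (· ≥ ·)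

/-- The hook partition `α(d,r) = (d-r, 1^r)`. -/
def hookPartition (d r : ℕ) : List ℕ := (d - r) :: List.replicate r 1

/-- The representation of `k[W_d]` on the permutation module `M^λ`, the free `k`-module
on the left cosets `W_d / W_λ` with `W_d` acting by left translation. -/
def PhiQuot (k : Type) [CommRing k] (d : ℕ) (lam : List ℕ) :
    MonoidAlgebra k (Equiv.Perm (Fin d)) →ₐ[k]
      Module.End k ((Equiv.Perm (Fin d) ⧸ youngSubgroup d lam) → k) :=
  MonoidAlgebra.lift k _ _
    (actEnd k (Equiv.Perm (Fin d)) (Equiv.Perm (Fin d) ⧸ youngSubgroup d lam))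

/-- The representation of `k[G]` (for `G ≤ W_d`) on the permutation module on the
left cosets `G / (G ∩ W_λ)`. -/
def PhiQuotSub (k : Type) [CommRing k] {d : ℕ} (G : Subgroup (Equiv.Perm (Fin d)))
    (lam : List ℕ) :
    MonoidAlgebra k ↥G →ₐ[k]
      Module.End k ((↥G ⧸ Subgroup.comap G.subtype (youngSubgroup d lam)) → k) :=
  MonoidAlgebra.lift k _ _
    (actEnd k ↥G (↥G ⧸ Subgroup.comap G.subtype (youngSubgroup d lam)))

/-- The Stirling number of the second kind `S(r,l)`: the number of set-partitions
of an `r`-element set into exactly `l` nonempty blocks. -/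
def stirling (r l : ℕ) : ℕ :=
  Nat.card {Λ : Setoid (Fin r) // Nat.card (Quotient Λ) = l}

/-- If `r + 1 ≥ n`, the representation `Φ_{n,r+1/2} : k[W_{n-1}] → End_k(V^{⊗r})`
(restriction of the diagonal `W_n`-action to `W_{n-1} = {w : w(n) = n}`) is faithful. -/
theorem stmt_1 (k : Type) [CommRing k] [Nontrivial k] (n r : ℕ) (hn : 0 < n)
    (hr : n ≤ r + 1) : Function.Injective ⇑(PhiSub k n r (stabLast n hn)) := by
  rw [injective_iff_map_eq_zero]
  intro a ha
  set j : Fin r → Fin n := fun α => ⟨min α.1 (n-1), by omega⟩ with hjdef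
  have key : ∀ σ w : Perm (Fin n), σ ∈ stabLast n hn → w ∈ stabLast n hn →
      (∀ α, σ (j α) = w (j α)) → σ = w := by
    intro σ w hσ hw h
    apply Equiv.ext
    intro x
    by_cases hx : x.1 = n - 1
    · have hx' : x = (⟨n - 1, Nat.sub_lt hn Nat.one_pos⟩ : Fin n) := Fin.ext hx
      rw [stabLast, MulAction.mem_stabilizer_iff] at hσ hw
      rw [hx']
      calc σ ⟨n - 1, Nat.sub_lt hn Nat.one_pos⟩ = ⟨n - 1, Nat.sub_lt hn Nat.one_pos⟩ := hσ
        _ = w ⟨n - 1, Nat.sub_lt hn Nat.one_pos⟩ := hw.symm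
    · have hxn : x.1 < n := x.isLt
      have hxr : x.1 < r := by omega
      have hjx : j ⟨x.1, hxr⟩ = x := by
        apply Fin.ext; simp [hjdef]; omega
      have := h ⟨x.1, hxr⟩
      rw [hjx] at this
      exact this
  ext w
  have h1 : (PhiSub k n r (stabLast n hn) a) (Pi.single j 1) ((w : Perm (Fin n)) • j) = 0 := by
    rw [ha]; simp
  rw [PhiSub, MonoidAlgebra.lift_apply] at h1
  rw [Finsupp.sum, LinearMap.coe_sum, Finset.sum_apply] at h1
  simp only [LinearMap.smul_apply, Pi.smul_apply, smul_eq_mul, permEnd, actEnd,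
    MonoidHom.comp_apply, MonoidHom.coe_mk, OneHom.coe_mk, LinearMap.funLeft_apply,
    Function.comp_apply, Subgroup.coe_subtype] at h1
  simp only [Finset.sum_apply, Pi.smul_apply, smul_eq_mul, LinearMap.funLeft_apply,
    Function.comp_apply] at h1
  have hcond : ∀ g : ↥(stabLast n hn),
      ((Pi.single j (1:k) : (Fin r → Fin n) → k) (((g : Perm (Fin n)))⁻¹ • ((w : Perm (Fin n)) • j))
      = if g = w then (1:k) else 0) := by
    intro g
    by_cases hgw : g = w
    · subst hgw
      rw [inv_smul_smul, if_pos rfl, Pi.single_eq_same]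
    · rw [if_neg hgw]
      apply Pi.single_eq_of_ne
      intro hcontra
      apply hgw
      apply Subtype.ext
      apply key _ _ g.2 w.2
      intro α
      have := congrFun hcontra α
      simp only [Pi.smul_apply, Perm.smul_def] at this
      have := congrArg (g : Perm (Fin n)) this
      simpa using this.symm
  simp only [hcond] at h1
  have h2 := h1
  simp only [mul_ite, mul_one, mul_zero] at h2
  rw [Finset.sum_ite_eq' a.coeff.support w (fun g => a.coeff g)] at h2
  by_cases hw : w ∈ a.coeff.support
  · rw [if_pos hw] at h2; simpa using h2
  · simpa using Finsupp.notMem_support_iff.mp hw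
end
end

section
/- Let k be a commutative ring and let Λ be a set-partition of {1,...,r} with l = ℓ(Λ) parts, where 1 ≤ l ≤ n. Then V(Λ) is isomorphic to H_n(l) as a k[W_n]-module; explicitly, the k-linear map sending each basis tensor v_{i_1} ⊗ ... ⊗ v_{i_l} of H_n(l) (with distinct factors) to the basis tensor of V(Λ) obtained by placing v_{i_j} in every tensor position belonging to the j-th block of Λ is a W_n-equivariant k-linear isomorphism onto V(Λ). -/
noncomputable section

open Equiv

/-! ### Auxiliary lemmas for `stmt_7` -/

section AuxStmt7

variable (k : Type) [CommRing k]

lemma permEnd_apply (n m : ℕ) (w : Equiv.Perm (Fin n)) (f : (Fin m → Fin n) → k)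
    (j : Fin m → Fin n) : permEnd k n m w f j = f (fun α => w⁻¹ (j α)) := rfl

lemma permEnd_single (n m : ℕ) (w : Equiv.Perm (Fin n)) (i : Fin m → Fin n) :
    permEnd k n m w (Pi.single i (1:k)) = Pi.single (fun α => w (i α)) 1 := by
  classical
  funext j
  rw [permEnd_apply, Pi.single_apply, Pi.single_apply]
  congr 1
  simp only [eq_iff_iff]
  constructor
  · intro h; funext α
    have := congrFun h α
    simpa using congrArg w this
  · intro h; funext α
    have := congrFun h α
    simp [this]

lemma exists_perm_extend (n l : ℕ) (i₁ i₂ : Fin l → Fin n)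
    (h₁ : Function.Injective i₁) (h₂ : Function.Injective i₂) :
    ∃ w : Equiv.Perm (Fin n), ∀ α, w (i₁ α) = i₂ α := by
  classical
  have hc1 : Fintype.card {x // x ∈ Set.range i₁} = l := by
    rw [Fintype.card_congr (Equiv.ofInjective i₁ h₁).symm, Fintype.card_fin]
  have hc2 : Fintype.card {x // x ∈ Set.range i₂} = l := by
    rw [Fintype.card_congr (Equiv.ofInjective i₂ h₂).symm, Fintype.card_fin]
  have hcard : Fintype.card {x // ¬ x ∈ Set.range i₁} = Fintype.card {x // ¬ x ∈ Set.range i₂} := by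
    rw [Fintype.card_subtype_compl, Fintype.card_subtype_compl, hc1, hc2]
  let e : {x // x ∈ Set.range i₁} ≃ {x // x ∈ Set.range i₂} :=
    (Equiv.ofInjective i₁ h₁).symm.trans (Equiv.ofInjective i₂ h₂)
  let f : {x // ¬ x ∈ Set.range i₁} ≃ {x // ¬ x ∈ Set.range i₂} := Fintype.equivOfCardEq hcard
  refine ⟨Equiv.subtypeCongr e f, fun α => ?_⟩
  have hmem : i₁ α ∈ Set.range i₁ := ⟨α, rfl⟩
  have : Equiv.subtypeCongr e f (i₁ α) = (e ⟨i₁ α, hmem⟩ : Fin n) := by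
    simp [Equiv.subtypeCongr, hmem]
  rw [this]
  show ((Equiv.ofInjective i₂ h₂) ((Equiv.ofInjective i₁ h₁).symm ⟨i₁ α, hmem⟩) : Fin n) = i₂ α
  rw [Equiv.ofInjective_symm_apply]
  rfl

end AuxStmt7

section AuxStmt7B

variable (k : Type) [CommRing k] {n r l : ℕ}

/-- The linear map `V^{⊗l} → V^{⊗r}` sending `δ_i ↦ δ_{i ∘ q}` (extension by zero). -/
def liftMap (q : Fin r → Fin l) : ((Fin l → Fin n) → k) →ₗ[k] ((Fin r → Fin n) → k) where
  toFun f := Function.extend (fun i : Fin l → Fin n => fun α => i (q α)) f 0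
  map_add' f g := by
    funext j
    show Function.extend (fun i : Fin l → Fin n => fun α => i (q α)) (f + g) 0 j
      = Function.extend (fun i : Fin l → Fin n => fun α => i (q α)) f 0 j
        + Function.extend (fun i : Fin l → Fin n => fun α => i (q α)) g 0 j
    simp only [Function.extend_def]
    split_ifs with h <;> simp
  map_smul' c f := by
    funext j
    show Function.extend (fun i : Fin l → Fin n => fun α => i (q α)) (c • f) 0 j
      = c • Function.extend (fun i : Fin l → Fin n => fun α => i (q α)) f 0 j
    simp only [Function.extend_def]
    split_ifs with h <;> simp

variable {q : Fin r → Fin l}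

lemma comp_injective (hq : Function.Surjective q) : Function.Injective (fun i : Fin l → Fin n => fun α => i (q α)) := by
  intro i₁ i₂ h
  funext m
  obtain ⟨α, rfl⟩ := hq m
  exact congrFun h α

lemma liftMap_comp_apply (hq : Function.Surjective q) (f : (Fin l → Fin n) → k) (i : Fin l → Fin n) :
    liftMap k q f (fun α => i (q α)) = f i :=
  Function.Injective.extend_apply (comp_injective (n := n) hq) f 0 i

lemma liftMap_injective (hq : Function.Surjective q) : Function.Injective (liftMap k q (n := n)) := by
  intro f g h
  funext i
  rw [← liftMap_comp_apply k hq f i, ← liftMap_comp_apply k hq g i, h]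

lemma liftMap_single (hq : Function.Surjective q) (i : Fin l → Fin n) :
    liftMap k q (Pi.single i (1:k)) = Pi.single (fun α => i (q α)) 1 := by
  classical
  funext j
  by_cases h : ∃ i' : Fin l → Fin n, (fun α => i' (q α)) = j
  · obtain ⟨i', rfl⟩ := h
    rw [liftMap_comp_apply k hq, Pi.single_apply, Pi.single_apply]
    congr 1
    simp only [eq_iff_iff]
    exact ⟨fun h' => by rw [h'], fun h' => comp_injective (n := n) hq h'⟩
  · rw [show liftMap k q (Pi.single i (1:k)) j
        = Function.extend (fun i : Fin l → Fin n => fun α => i (q α)) (Pi.single i 1) 0 j from rfl,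
      Function.extend_apply' _ _ _ h, Pi.single_apply, if_neg, Pi.zero_apply]
    intro h'
    exact h ⟨i, h'.symm⟩

lemma liftMap_equivariant (hq : Function.Surjective q) (w : Equiv.Perm (Fin n)) (f : (Fin l → Fin n) → k) :
    permEnd k n r w (liftMap k q f) = liftMap k q (permEnd k n l w f) := by
  classical
  funext j
  rw [permEnd_apply]
  by_cases h : ∃ i : Fin l → Fin n, (fun α => i (q α)) = j
  · obtain ⟨i, rfl⟩ := h
    have h2 : liftMap k q f (fun α => w⁻¹ (i (q α))) = f (fun m => w⁻¹ (i m)) :=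
      liftMap_comp_apply k hq f (fun m => w⁻¹ (i m))
    rw [h2, liftMap_comp_apply k hq, permEnd_apply]
  · have h2 : ¬ ∃ i : Fin l → Fin n, (fun α => i (q α)) = (fun α => w⁻¹ (j α)) := by
      rintro ⟨i, hi⟩
      refine h ⟨fun m => w (i m), ?_⟩
      funext α
      have := congrFun hi α
      simpa using congrArg w this
    rw [show liftMap k q f (fun α => w⁻¹ (j α))
        = Function.extend (fun i : Fin l → Fin n => fun α => i (q α)) f 0 (fun α => w⁻¹ (j α)) from rfl,
      Function.extend_apply' _ _ _ h2,
      show liftMap k q (permEnd k n l w f) j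
        = Function.extend (fun i : Fin l → Fin n => fun α => i (q α)) (permEnd k n l w f) 0 j from rfl,
      Function.extend_apply' _ _ _ h]
    rfl

end AuxStmt7B
/-- For a set-partition `Λ` of `{1, …, r}` with `l = ℓ(Λ)` parts (`1 ≤ l ≤ n`),
`V(Λ) ≅ H_n(l)` as `k[W_n]`-modules; explicitly, given an enumeration `β` of the
blocks of `Λ`, the `k`-linear map sending each basis tensor `v_{i_1} ⊗ ⋯ ⊗ v_{i_l}`
of `H_n(l)` (with distinct factors) to the basis tensor of `V(Λ)` obtained by placing
`v_{i_j}` in every tensor position of the `j`-th block of `Λ` is a `W_n`-equivariant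
`k`-linear isomorphism onto `V(Λ)`. -/
theorem stmt_7 (k : Type) [CommRing k] (n r l : ℕ) (hl : 1 ≤ l) (hn : l ≤ n)
    (Λ : Setoid (Fin r)) (hcard : Nat.card (Quotient Λ) = l) (β : Quotient Λ ≃ Fin l) :
    ∃ e : ↥(Hmod k n l hn) ≃ₗ[k] ↥(Vpart k n r Λ),
      (∀ (i : Fin l → Fin n), Function.Injective i →
        ∀ (h1 : Pi.single i (1 : k) ∈ Hmod k n l hn)
          (h2 : Pi.single (fun α : Fin r => i (β (Quotient.mk Λ α))) (1 : k) ∈ Vpart k n r Λ),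
          e ⟨Pi.single i 1, h1⟩ = ⟨Pi.single (fun α : Fin r => i (β (Quotient.mk Λ α))) 1, h2⟩) ∧
      ∀ (w : Equiv.Perm (Fin n)) (x : ↥(Hmod k n l hn))
        (hx : permEnd k n l w ↑x ∈ Hmod k n l hn)
        (hy : permEnd k n r w ↑(e x) ∈ Vpart k n r Λ),
        e ⟨permEnd k n l w ↑x, hx⟩ = ⟨permEnd k n r w ↑(e x), hy⟩ := by
  classical
  set q : Fin r → Fin l := fun α => β (Quotient.mk Λ α) with hqdef
  have hq : Function.Surjective q := by
    intro m
    refine ⟨(β.symm m).out, ?_⟩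
    show β (Quotient.mk Λ (β.symm m).out) = m
    rw [Quotient.out_eq, Equiv.apply_symm_apply]
  have hbase : Function.Injective (baseIdx n l hn) := by
    intro a b h
    have := congrArg Fin.val h
    simp only [baseIdx] at this
    exact Fin.ext (by omega)
  have hker : ∀ i : Fin l → Fin n, Function.Injective i →
      Setoid.ker (fun α => i (q α)) = Λ := by
    intro i hi
    apply Setoid.ext
    intro a b
    rw [Setoid.ker_def]
    constructor
    · intro h
      have h1 : q a = q b := hi h
      have h2 : Quotient.mk Λ a = Quotient.mk Λ b := β.injective h1
      exact Quotient.eq.mp h2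
    · intro h
      have h2 : Quotient.mk Λ a = Quotient.mk Λ b := Quotient.sound h
      show i (q a) = i (q b)
      rw [hqdef]
      simp only [h2]
  have hHmod : Hmod k n l hn = Submodule.span k
      {f | ∃ i : Fin l → Fin n, Function.Injective i ∧ f = Pi.single i (1:k)} := by
    unfold Hmod
    congr 1
    ext f
    constructor
    · rintro ⟨w, rfl⟩
      exact ⟨fun α => w (baseIdx n l hn α), w.injective.comp hbase, permEnd_single k n l w _⟩
    · rintro ⟨i, hi, rfl⟩
      obtain ⟨w, hw⟩ := exists_perm_extend n l (baseIdx n l hn) i hbase hi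
      refine ⟨w, ?_⟩
      show permEnd k n l w (Pi.single (baseIdx n l hn) 1) = Pi.single i 1
      rw [permEnd_single]
      have : (fun α => w (baseIdx n l hn α)) = i := funext hw
      rw [this]
  have himage : (liftMap k q (n := n)) ''
      {f | ∃ i : Fin l → Fin n, Function.Injective i ∧ f = Pi.single i (1:k)}
      = {f | ∃ j : Fin r → Fin n, Setoid.ker j = Λ ∧ f = Pi.single j (1:k)} := by
    ext f
    constructor
    · rintro ⟨g, ⟨i, hi, rfl⟩, rfl⟩
      exact ⟨fun α => i (q α), hker i hi, liftMap_single k hq i⟩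
    · rintro ⟨j, hj, rfl⟩
      set i : Fin l → Fin n := fun m => j (β.symm m).out with hidef
      have hjrel : ∀ a b : Fin r, Λ a b → j a = j b := by
        intro a b hab
        rw [← Setoid.ker_def (f := j), hj]
        exact hab
      have hjrel' : ∀ a b : Fin r, j a = j b → Λ a b := by
        intro a b hab
        have h1 : Setoid.ker j a b := Setoid.ker_def.mpr hab
        rw [hj] at h1
        exact h1
      have hcomp : (fun α => i (q α)) = j := by
        funext α
        show j (β.symm (β (Quotient.mk Λ α))).out = j α
        rw [Equiv.symm_apply_apply]
        have hrel : Λ ((Quotient.mk Λ α).out) α := Quotient.eq.mp ((Quotient.mk Λ α).out_eq)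
        exact hjrel _ _ hrel
      have hi : Function.Injective i := by
        intro m m' h
        have h1 : Λ (β.symm m).out (β.symm m').out := hjrel' _ _ h
        have h2 : Quotient.mk Λ (β.symm m).out = Quotient.mk Λ (β.symm m').out :=
          Quotient.sound h1
        rw [Quotient.out_eq, Quotient.out_eq] at h2
        have := β.symm.injective h2
        exact this
      exact ⟨Pi.single i 1, ⟨i, hi, rfl⟩, by rw [liftMap_single k hq i, hcomp]⟩
  have hmap : Submodule.map (liftMap k q) (Hmod k n l hn) = Vpart k n r Λ := by
    rw [hHmod, Submodule.map_span, himage]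
    rfl
  let e : ↥(Hmod k n l hn) ≃ₗ[k] ↥(Vpart k n r Λ) :=
    (Submodule.equivMapOfInjective (liftMap k q) (liftMap_injective k hq)
      (Hmod k n l hn)).trans (LinearEquiv.ofEq _ _ hmap)
  have hcoe : ∀ x : ↥(Hmod k n l hn), ((e x : ↥(Vpart k n r Λ)) : (Fin r → Fin n) → k)
      = liftMap k q ↑x := fun x => rfl
  refine ⟨e, ?_, ?_⟩
  · intro i hi h1 h2
    apply Subtype.ext
    rw [hcoe]
    exact liftMap_single k hq i
  · intro w x hx hy
    apply Subtype.ext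
    show liftMap k q (permEnd k n l w ↑x) = permEnd k n r w ↑(e x)
    rw [hcoe x]
    exact (liftMap_equivariant k hq w ↑x).symm
end
end
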